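/- Let H be a hypergraph and k a number, and let H'_i denote the hypergraph of k-pseudo-cores of level i (H'_0 = H). Then the sequence (H'_0, H'_1, …, H'_{d(H)}) is a matryoshka sequence for H and k: H'_0 = H; d(H'_i) ≤ d(H) − i; k-cores(H'_i) ⊆ H'_{i+1}; and every hitting set of H of size at most k is a hitting set of every H'_i. -/

import Mathlib

/-- A sunflower with core `C`. -/
def IsSunflower {V : Type*} [DecidableEq V] (S : Finset (Finset V)) (C : Finset V) : Prop :=
  (∀ p ∈ S, C ⊂ p) ∧ ∀ p ∈ S, ∀ q ∈ S, p ≠ q → p ∩ q = C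

/-- The `k`-cores of a hypergraph: cores of sunflowers with more than `k` petals. -/
def KCores {V : Type*} [DecidableEq V] (k : ℕ) (E : Set (Finset V)) : Set (Finset V) :=
  {C | ∃ S : Finset (Finset V), ↑S ⊆ E ∧ k < S.card ∧ IsSunflower S C}

/-- A `T^k_L`-pseudo-sunflower for the hypergraph `E` with pseudo-core `C`.
The leaves of the complete `(k+1)`-ary tree `T^k_L` of depth `L` are encoded as
the sequences `Fin L → Fin (k+1)` of child choices along the root-to-leaf path;
the first depth at which the paths to two leaves `l ≠ m` diverge is `z + 1`
where `z` is the least index with `l z ≠ m z`. -/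
def IsPseudoSunflower {V : Type*} [DecidableEq V] (E : Set (Finset V)) (k L : ℕ)
    (C : Finset V) (S : (Fin L → Fin (k + 1)) → ℕ → Finset V) : Prop :=
  (∀ l, S l 0 = C) ∧
  (∀ l, (Finset.range (L + 1)).biUnion (S l) ∈ E) ∧
  (∀ l, ∀ i j : ℕ, i < j → j ≤ L → S l i ∩ S l j = ∅) ∧
  (∀ l, ∀ i : ℕ, 1 ≤ i → i ≤ L → (S l i).Nonempty) ∧
  (∀ l m : Fin L → Fin (k + 1), ∀ z : Fin L,
    (∀ z' : Fin L, z' < z → l z' = m z') → l z ≠ m z →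
      S l (z.val + 1) ∩ S m (z.val + 1) = ∅)

/-- The `k`-pseudo-cores of level `L` of the hypergraph `E`. -/
def PseudoCores {V : Type*} [DecidableEq V] (E : Set (Finset V)) (k L : ℕ) :
    Set (Finset V) :=
  {C | ∃ S, IsPseudoSunflower E k L C S}

/-- `X` is a hitting set of the hypergraph with edge set `E`. -/
def HitsAll {V : Type*} [DecidableEq V] (X : Finset V) (E : Set (Finset V)) : Prop :=
  ∀ e ∈ E, (e ∩ X).Nonempty

lemma pseudoCores_zero {V : Type*} [DecidableEq V] (E : Set (Finset V)) (k : ℕ) :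
    PseudoCores E k 0 = E := by
  ext C
  constructor
  · rintro ⟨S, h0, hE, -, -, -⟩
    have := hE (fun x => x.elim0)
    simpa [Finset.range_one, h0] using this
  · intro hC
    refine ⟨fun _ n => if n = 0 then C else ∅, fun l => by simp, fun l => ?_, ?_, ?_, ?_⟩
    · simpa [Finset.range_one] using hC
    · intro l i j hij hj; omega
    · intro l i hi hiL; omega
    · intro l m z; exact z.elim0

lemma card_pseudoCore {V : Type*} [DecidableEq V] (E : Set (Finset V)) (k d : ℕ)
    (hd : ∀ e ∈ E, e.card ≤ d) (i : ℕ) (hi : i ≤ d) :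
    ∀ C ∈ PseudoCores E k i, C.card ≤ d - i := by
  rintro C ⟨S, h0, hE, hdisj, hne, -⟩
  set l : Fin i → Fin (k + 1) := fun _ => 0 with hl
  have hcard : ((Finset.range (i + 1)).biUnion (S l)).card
      = ∑ j ∈ Finset.range (i + 1), (S l j).card := by
    apply Finset.card_biUnion
    intro a ha b hb hab
    rw [Function.onFun, Finset.disjoint_iff_inter_eq_empty]
    rcases Nat.lt_or_ge a b with h | h
    · exact hdisj l a b h (by simpa using Nat.lt_succ_iff.mp (Finset.mem_range.mp hb))
    · rw [Finset.inter_comm]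
      exact hdisj l b a (by omega) (by simpa using Nat.lt_succ_iff.mp (Finset.mem_range.mp ha))
  have hle : ((Finset.range (i + 1)).biUnion (S l)).card ≤ d := hd _ (hE l)
  rw [hcard, Finset.sum_range_succ'] at hle
  have hi' : i ≤ ∑ j ∈ Finset.range i, (S l (j + 1)).card := by
    calc i = ∑ _j ∈ Finset.range i, 1 := by simp
    _ ≤ _ := Finset.sum_le_sum (fun j hj => Finset.card_pos.mpr
        (hne l (j + 1) (by omega) (by simpa using Finset.mem_range.mp hj)))
  rw [h0] at hle
  omega

lemma hits_pseudoCores {V : Type*} [DecidableEq V] (E : Set (Finset V)) (k L : ℕ)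
    (X : Finset V) (hX : X.card ≤ k) (hH : HitsAll X E) :
    HitsAll X (PseudoCores E k L) := by
  rintro C ⟨S, hS0, hSE, hSdisj, hSne, hSdiv⟩
  by_contra hC
  rw [Finset.not_nonempty_iff_eq_empty] at hC
  have key : ∀ z, z ≤ L → ∃ l₀ : Fin L → Fin (k + 1),
      ∀ m : Fin L → Fin (k + 1), (∀ z' : Fin L, z'.val < z → m z' = l₀ z') →
        ∀ j, 1 ≤ j → j ≤ z → S m j ∩ X = ∅ := by
    intro z
    induction z with
    | zero => exact fun _ => ⟨fun _ => 0, fun m _ j hj1 hj2 => by omega⟩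
    | succ z ih =>
      intro hz
      obtain ⟨l₀, hl₀⟩ := ih (by omega)
      have hzL : z < L := hz
      have hgood : ∃ c : Fin (k + 1), ∀ m : Fin L → Fin (k + 1),
          (∀ z' : Fin L, z'.val < z → m z' = l₀ z') → m ⟨z, hzL⟩ = c →
          S m (z + 1) ∩ X = ∅ := by
        by_contra hbad
        push_neg at hbad
        choose m hm1 hm2 hm3 using hbad
        have hx : ∀ c, ∃ x, x ∈ S (m c) (z + 1) ∧ x ∈ X := by
          intro c
          obtain ⟨x, hx⟩ := hm3 c
          exact ⟨x, Finset.mem_inter.1 hx⟩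
        choose x hx1 hx2 using hx
        have hinj : Function.Injective x := by
          intro a b hab
          by_contra hne
          have hdisj := hSdiv (m a) (m b) ⟨z, hzL⟩
            (fun z' hz' => ((hm1 a z' hz').trans (hm1 b z' hz').symm))
            (by rw [hm2 a, hm2 b]; exact fun h => hne h)
          have hmem : x a ∈ S (m a) (z + 1) ∩ S (m b) (z + 1) :=
            Finset.mem_inter.2 ⟨hx1 a, hab ▸ hx1 b⟩
          rw [hdisj] at hmem
          exact absurd hmem (Finset.notMem_empty _)
        have hcard := Finset.card_le_card_of_injOn (s := Finset.univ) (t := X) x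
          (fun a _ => hx2 a) (fun a _ b _ h => hinj h)
        simp only [Finset.card_univ, Fintype.card_fin] at hcard
        omega
      obtain ⟨c, hc⟩ := hgood
      refine ⟨Function.update l₀ ⟨z, hzL⟩ c, ?_⟩
      intro m hm j hj1 hj2
      have hagree : ∀ z' : Fin L, z'.val < z → m z' = l₀ z' := by
        intro z' hz'
        have h := hm z' (by omega)
        have hne : z' ≠ (⟨z, hzL⟩ : Fin L) := by
          intro hh
          rw [hh] at hz'
          simp at hz'
        rwa [Function.update_of_ne hne c l₀] at h
      rcases Nat.lt_or_ge j (z + 1) with h | h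
      · exact hl₀ m hagree j hj1 (by omega)
      · have hj : j = z + 1 := by omega
        subst hj
        refine hc m hagree ?_
        have h := hm ⟨z, hzL⟩ (by simp)
        rwa [Function.update_self] at h
  obtain ⟨l₀, hl₀⟩ := key L le_rfl
  obtain ⟨x, hx⟩ := hH _ (hSE l₀)
  rw [Finset.mem_inter, Finset.mem_biUnion] at hx
  obtain ⟨⟨j, hj, hxj⟩, hxX⟩ := hx
  rw [Finset.mem_range] at hj
  rcases Nat.eq_zero_or_pos j with h0 | h1
  · subst h0
    rw [hS0] at hxj
    have : x ∈ C ∩ X := Finset.mem_inter.2 ⟨hxj, hxX⟩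
    rw [hC] at this
    exact absurd this (Finset.notMem_empty _)
  · have hz := hl₀ l₀ (fun _ _ => rfl) j h1 (by omega)
    have : x ∈ S l₀ j ∩ X := Finset.mem_inter.2 ⟨hxj, hxX⟩
    rw [hz] at this
    exact absurd this (Finset.notMem_empty _)

lemma kCores_subset_pseudoCores {V : Type*} [DecidableEq V] (E : Set (Finset V)) (k i : ℕ) :
    KCores k (PseudoCores E k i) ⊆ PseudoCores E k (i + 1) := by
  rintro C ⟨Sf, hsub, hcard, hssub, hint⟩
  obtain ⟨t, hts, htcard⟩ := Finset.exists_subset_card_eq hcard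
  set e := t.equivFinOfCardEq htcard with he
  set p : Fin (k + 1) → Finset V := fun a => (e.symm a : Finset V) with hp
  have hpinj : Function.Injective p := fun a b h => e.symm.injective (Subtype.ext h)
  have hpmem : ∀ a, p a ∈ Sf := fun a => hts (e.symm a).2
  have hpss : ∀ a, C ⊂ p a := fun a => hssub _ (hpmem a)
  have hpint : ∀ a b, a ≠ b → p a ∩ p b = C := fun a b hab =>
    hint _ (hpmem a) _ (hpmem b) (fun h => hab (hpinj h))
  have hWex : ∀ a, ∃ W, IsPseudoSunflower E k i (p a) W := fun a => hsub (hpmem a)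
  choose W hW using hWex
  have hW0 : ∀ a l, W a l 0 = p a := fun a => (hW a).1
  have hWE : ∀ a l, (Finset.range (i + 1)).biUnion (W a l) ∈ E := fun a => (hW a).2.1
  have hWd : ∀ a l, ∀ x y : ℕ, x < y → y ≤ i → W a l x ∩ W a l y = ∅ := fun a => (hW a).2.2.1
  have hWn : ∀ a l, ∀ x : ℕ, 1 ≤ x → x ≤ i → (W a l x).Nonempty := fun a => (hW a).2.2.2.1
  have hWv := fun a => (hW a).2.2.2.2
  refine ⟨fun l j => match j with
    | 0 => C
    | 1 => p (l 0) \ C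
    | (n + 2) => W (l 0) (Fin.tail l) (n + 1), ?_, ?_, ?_, ?_, ?_⟩
  · intro l; rfl
  · -- the edge condition
    intro l
    have : (Finset.range (i + 1 + 1)).biUnion (fun j => match j with
        | 0 => C
        | 1 => p (l 0) \ C
        | (n + 2) => W (l 0) (Fin.tail l) (n + 1))
        = (Finset.range (i + 1)).biUnion (W (l 0) (Fin.tail l)) := by
      ext x
      simp only [Finset.mem_biUnion, Finset.mem_range]
      constructor
      · rintro ⟨j, hj, hx⟩
        match j with
        | 0 => exact ⟨0, by omega, by rw [hW0]; exact (hpss (l 0)).1 hx⟩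
        | 1 => exact ⟨0, by omega, by rw [hW0]; exact (Finset.mem_sdiff.1 hx).1⟩
        | (n + 2) => exact ⟨n + 1, by omega, hx⟩
      · rintro ⟨j, hj, hx⟩
        match j with
        | 0 =>
          rw [hW0] at hx
          by_cases hc : x ∈ C
          · exact ⟨0, by omega, hc⟩
          · exact ⟨1, by omega, Finset.mem_sdiff.2 ⟨hx, hc⟩⟩
        | (n + 1) => exact ⟨n + 2, by omega, hx⟩
    rw [this]
    exact hWE _ _
  · -- row disjointness
    intro l a b hab hb
    match a, b with
    | 0, 1 =>
      rw [Finset.eq_empty_iff_forall_notMem]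
      intro x hx
      rw [Finset.mem_inter, Finset.mem_sdiff] at hx
      exact hx.2.2 hx.1
    | 0, (n + 2) =>
      have h1 : C ∩ W (l 0) (Fin.tail l) (n + 1)
          ⊆ W (l 0) (Fin.tail l) 0 ∩ W (l 0) (Fin.tail l) (n + 1) :=
        Finset.inter_subset_inter (by rw [hW0]; exact (hpss (l 0)).1) Finset.Subset.rfl
      rw [hWd (l 0) (Fin.tail l) 0 (n + 1) (by omega) (by omega)] at h1
      exact Finset.subset_empty.1 h1
    | 1, (n + 2) =>
      have h1 : (p (l 0) \ C) ∩ W (l 0) (Fin.tail l) (n + 1)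
          ⊆ W (l 0) (Fin.tail l) 0 ∩ W (l 0) (Fin.tail l) (n + 1) :=
        Finset.inter_subset_inter (by rw [hW0]; exact Finset.sdiff_subset) Finset.Subset.rfl
      rw [hWd (l 0) (Fin.tail l) 0 (n + 1) (by omega) (by omega)] at h1
      exact Finset.subset_empty.1 h1
    | (m + 2), (n + 2) =>
      exact hWd (l 0) (Fin.tail l) (m + 1) (n + 1) (by omega) (by omega)
  · -- nonemptiness
    intro l a ha1 ha2
    match a with
    | 1 => exact Finset.sdiff_nonempty.2 (fun h => (hpss (l 0)).2 h)
    | (n + 2) => exact hWn (l 0) (Fin.tail l) (n + 1) (by omega) (by omega)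
  · -- divergence
    intro l m z hagree hne
    rcases Nat.eq_zero_or_pos z.val with h0 | h1
    · have hz0 : z = 0 := Fin.ext h0
      subst hz0
      have hlm : l 0 ≠ m 0 := hne
      show (p (l 0) \ C) ∩ (p (m 0) \ C) = ∅
      rw [Finset.eq_empty_iff_forall_notMem]
      intro x hx
      rw [Finset.mem_inter, Finset.mem_sdiff, Finset.mem_sdiff] at hx
      have : x ∈ p (l 0) ∩ p (m 0) := Finset.mem_inter.2 ⟨hx.1.1, hx.2.1⟩
      rw [hpint (l 0) (m 0) hlm] at this
      exact hx.1.2 this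
    · obtain ⟨n, hn⟩ : ∃ n, z.val = n + 1 := ⟨z.val - 1, by omega⟩
      have hni : n < i := by omega
      set z₀ : Fin i := ⟨n, hni⟩ with hz₀
      have hl0m0 : l 0 = m 0 := hagree 0 (by rw [Fin.lt_def]; have : Fin.val (0 : Fin (i + 1)) = 0 := (by simp); omega)
      have hdiv := hWv (l 0) (Fin.tail l) (Fin.tail m) z₀
        (by
          intro z' hz'
          show l z'.succ = m z'.succ
          exact hagree z'.succ (by rw [Fin.lt_def] at hz' ⊢; simp at hz' ⊢; have : ((⟨n, hni⟩ : Fin i) : ℕ) = n := rfl; omega))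
        (by
          show l z₀.succ ≠ m z₀.succ
          have hzz : z₀.succ = z := Fin.ext (by simp [hz₀]; omega)
          rw [hzz]
          exact hne)
      rw [hn]
      show W (l 0) (Fin.tail l) (n + 1) ∩ W (m 0) (Fin.tail m) (n + 1) = ∅
      rw [← hl0m0]
      exact hdiv

/-- **Pseudo-cores form a matryoshka sequence.** With `H'_i = PseudoCores E k i`,
we have: `H'_0 = H`; `d(H'_i) ≤ d(H) - i`; `k-cores(H'_i) ⊆ H'_{i+1}`; and every
hitting set of `H` of size at most `k` is a hitting set of every `H'_i`. -/
theorem pseudoCores_matryoshka {V : Type*} [DecidableEq V]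
    (E : Set (Finset V)) (k d : ℕ) (hd : ∀ e ∈ E, e.card ≤ d) :
    PseudoCores E k 0 = E ∧
    (∀ i ≤ d, ∀ e ∈ PseudoCores E k i, e.card ≤ d - i) ∧
    (∀ i < d, KCores k (PseudoCores E k i) ⊆ PseudoCores E k (i + 1)) ∧
    (∀ i ≤ d, ∀ X : Finset V, X.card ≤ k → HitsAll X E →
      HitsAll X (PseudoCores E k i)) := by
  refine ⟨pseudoCores_zero E k, ?_, ?_, ?_⟩
  · exact fun i hi e he => card_pseudoCore E k d hd i hi e he
  · exact fun i _ => kCores_subset_pseudoCores E k i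
  · exact fun i _ X hX hH => hits_pseudoCores E k i X hX hH
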